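/- Let f : V × V × (0,∞) → ℝ satisfy: for every t0 > 0 there is C with |f(x,y;t)| ≤ C * t^k for 0 < t < t0 and all x,y, and the L^1(θ)-norm of f(x,·;t) is bounded by B on (0,t0). Then the series Σ_{ℓ=1}^∞ |f^{*ℓ}(x,y;t)| converges and is bounded by C * B * t^k * exp(t * B) / B, in particular Σ_{ℓ=1}^∞ |f^{*ℓ}(x,y;t)| = O(t^k) as t → 0, uniformly in x, y ∈ V. -/

import Mathlib

open MeasureTheory

set_option maxHeartbeats 1000000

/-- Time–space convolution of two kernels on a weighted countable vertex set. -/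
noncomputable def conv {V : Type*} (θ : V → ℝ) (F G : V → V → ℝ → ℝ) :
    V → V → ℝ → ℝ :=
  fun x y t => ∫ r in (0:ℝ)..t, ∑' z, F x z (t - r) * G z y r * θ z

/-- `iterConv θ f n` is the `(n+1)`-fold convolution `f^{*(n+1)}`. -/
noncomputable def iterConv {V : Type*} (θ : V → ℝ) (f : V → V → ℝ → ℝ) :
    ℕ → (V → V → ℝ → ℝ)
  | 0 => f
  | n + 1 => conv θ f (iterConv θ f n)

lemma iterConv_bound {V : Type*} [Countable V]
    (θ : V → ℝ) (hθ : ∀ x, 0 < θ x)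
    (f : V → V → ℝ → ℝ) (t0 C B : ℝ) (ht0 : 0 < t0) (hC : 0 < C) (hB : 0 < B) (k : ℕ)
    (hf : ∀ (x y : V) (t : ℝ), 0 < t → t < t0 → |f x y t| ≤ C * t ^ k)
    (hfL1 : ∀ (x : V) (t : ℝ), 0 < t → t < t0 →
      Summable (fun z => |f x z t| * θ z) ∧ (∑' z, |f x z t| * θ z) ≤ B) :
    ∀ (n : ℕ) (x y : V) (t : ℝ), 0 < t → t < t0 →
      |iterConv θ f n x y t| ≤ C * t ^ k * (B * t) ^ n / ((Nat.factorial n : ℕ) : ℝ) := by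
  intro n
  induction n with
  | zero =>
    intro x y t ht ht0'
    simpa [iterConv] using hf x y t ht ht0'
  | succ n ih =>
    intro x y t ht ht0'
    have hfac : (0 : ℝ) < ((Nat.factorial n : ℕ) : ℝ) := by exact_mod_cast Nat.factorial_pos n
    set M : ℝ → ℝ := fun r => C * r ^ k * (B * r) ^ n / ((Nat.factorial n : ℕ) : ℝ) with hM
    have hMnn : ∀ r : ℝ, 0 ≤ r → 0 ≤ M r := by
      intro r hr
      have : (0:ℝ) ≤ B * r := mul_nonneg hB.le hr
      positivity
    -- pointwise bound on the integrand on (0, t)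
    have key : ∀ r ∈ Set.Ioo (0:ℝ) t,
        |∑' z, f x z (t - r) * iterConv θ f n z y r * θ z|
          ≤ (C * B ^ (n+1) / ((Nat.factorial n : ℕ) : ℝ)) * r ^ (k + n) := by
      intro r hr
      obtain ⟨hr0, hrt⟩ := hr
      have hs0 : 0 < t - r := by linarith
      have hst0 : t - r < t0 := by linarith
      have hL1 := hfL1 x (t - r) hs0 hst0
      have hrlt : r < t0 := lt_trans hrt ht0'
      have hbound : ∀ z, |f x z (t - r) * iterConv θ f n z y r * θ z|
          ≤ M r * (|f x z (t - r)| * θ z) := by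
        intro z
        have h1 : |f x z (t - r) * iterConv θ f n z y r * θ z|
            = |f x z (t - r)| * |iterConv θ f n z y r| * θ z := by
          rw [abs_mul, abs_mul, abs_of_pos (hθ z)]
        rw [h1]
        have h2 : |iterConv θ f n z y r| ≤ M r := ih z y r hr0 hrlt
        have := mul_le_mul_of_nonneg_left h2 (abs_nonneg (f x z (t - r)))
        have := mul_le_mul_of_nonneg_right this (hθ z).le
        calc |f x z (t - r)| * |iterConv θ f n z y r| * θ z
            ≤ |f x z (t - r)| * M r * θ z := this
          _ = M r * (|f x z (t - r)| * θ z) := by ring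
      have hsumdom : Summable (fun z => M r * (|f x z (t - r)| * θ z)) :=
        hL1.1.mul_left _
      have hsumabs : Summable (fun z => |f x z (t - r) * iterConv θ f n z y r * θ z|) :=
        Summable.of_nonneg_of_le (fun z => abs_nonneg _) hbound hsumdom
      have hsum : Summable (fun z => f x z (t - r) * iterConv θ f n z y r * θ z) :=
        hsumabs.of_abs
      calc |∑' z, f x z (t - r) * iterConv θ f n z y r * θ z|
          ≤ ∑' z, |f x z (t - r) * iterConv θ f n z y r * θ z| := by
            have hs : Summable (fun z => ‖f x z (t - r) * iterConv θ f n z y r * θ z‖) := by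
              simpa only [Real.norm_eq_abs] using hsumabs
            simpa only [Real.norm_eq_abs] using norm_tsum_le_tsum_norm hs
        _ ≤ ∑' z, M r * (|f x z (t - r)| * θ z) :=
            Summable.tsum_le_tsum hbound hsumabs hsumdom
        _ = M r * ∑' z, |f x z (t - r)| * θ z := by rw [tsum_mul_left]
        _ ≤ M r * B := by
            have := hL1.2
            exact mul_le_mul_of_nonneg_left this (hMnn r hr0.le)
        _ = (C * B ^ (n+1) / ((Nat.factorial n : ℕ) : ℝ)) * r ^ (k + n) := by
            simp only [hM]
            rw [mul_pow, pow_succ, pow_add]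
            ring
    -- the integral bound
    have hIb : IntervalIntegrable (fun r => (C * B ^ (n+1) / ((Nat.factorial n : ℕ) : ℝ)) * r ^ (k + n))
        volume 0 t := (continuous_const.mul (continuous_pow _)).intervalIntegrable _ _
    have hae : ∀ᵐ r ∂(volume.restrict (Set.uIoc (0:ℝ) t)),
        ‖∑' z, f x z (t - r) * iterConv θ f n z y r * θ z‖
          ≤ (C * B ^ (n+1) / ((Nat.factorial n : ℕ) : ℝ)) * r ^ (k + n) := by
      have hne : ∀ᵐ r ∂(volume : Measure ℝ), r ≠ t := by
        rw [ae_iff]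
        simp only [ne_eq, not_not]
        have : {r : ℝ | r = t} = {t} := rfl
        rw [this]
        exact measure_singleton t
      have hmem := ae_restrict_mem (μ := volume) (measurableSet_uIoc (a := (0:ℝ)) (b := t))
      filter_upwards [hmem, (Measure.restrict_le_self (μ := volume)
        (s := Set.uIoc (0:ℝ) t)).absolutelyContinuous hne] with r hr hrne
      rw [Set.uIoc_of_le ht.le] at hr
      exact key r ⟨hr.1, lt_of_le_of_ne hr.2 hrne⟩
    have hint : |iterConv θ f (n+1) x y t|
        ≤ |∫ r in (0:ℝ)..t, (C * B ^ (n+1) / ((Nat.factorial n : ℕ) : ℝ)) * r ^ (k + n)| := by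
      have : iterConv θ f (n+1) x y t
          = ∫ r in (0:ℝ)..t, ∑' z, f x z (t - r) * iterConv θ f n z y r * θ z := rfl
      rw [this, ← Real.norm_eq_abs]
      exact intervalIntegral.norm_integral_le_abs_of_norm_le hae hIb
    -- compute the integral
    have hval : ∫ r in (0:ℝ)..t, (C * B ^ (n+1) / ((Nat.factorial n : ℕ) : ℝ)) * r ^ (k + n)
        = (C * B ^ (n+1) / ((Nat.factorial n : ℕ) : ℝ)) * (t ^ (k + n + 1) / (k + n + 1)) := by
      rw [intervalIntegral.integral_const_mul, integral_pow]
      norm_num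
    rw [hval] at hint
    have hnn : (0:ℝ) ≤ (C * B ^ (n+1) / ((Nat.factorial n : ℕ) : ℝ)) * (t ^ (k + n + 1) / (k + n + 1)) := by
      positivity
    rw [abs_of_nonneg hnn] at hint
    refine hint.trans ?_
    have hfacs : ((Nat.factorial (n+1) : ℕ) : ℝ) = (n+1) * ((Nat.factorial n : ℕ) : ℝ) := by
      rw [Nat.factorial_succ]; push_cast; ring
    have hden : (((Nat.factorial (n+1) : ℕ) : ℝ)) ≤ (k + n + 1) * ((Nat.factorial n : ℕ) : ℝ) := by
      rw [hfacs]
      have : (n + 1 : ℝ) ≤ (k + n + 1 : ℝ) := by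
        have : (0:ℝ) ≤ (k:ℝ) := Nat.cast_nonneg k
        linarith
      exact mul_le_mul_of_nonneg_right this hfac.le
    have heq : (C * B ^ (n+1) / ((Nat.factorial n : ℕ) : ℝ)) * (t ^ (k + n + 1) / (k + n + 1))
        = (C * t ^ k * (B * t) ^ (n+1)) / ((k + n + 1) * ((Nat.factorial n : ℕ) : ℝ)) := by
      rw [mul_pow]
      field_simp
      ring
    rw [heq]
    apply div_le_div_of_nonneg_left _ _ hden
    · have : (0:ℝ) ≤ B * t := mul_nonneg hB.le ht.le
      positivity
    · exact_mod_cast Nat.factorial_pos (n+1)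

/-- The series `Σ_{ℓ≥1} |f^{*ℓ}(x,y;t)|` converges and is `O(t^k)` as `t → 0`,
being bounded by `C B t^k exp(tB)/B`, uniformly in `x, y`. -/
theorem convolution_series_bound {V : Type*} [Countable V]
    (θ : V → ℝ) (hθ : ∀ x, 0 < θ x)
    (f : V → V → ℝ → ℝ) (t0 C B : ℝ) (ht0 : 0 < t0) (hC : 0 < C) (hB : 0 < B) (k : ℕ)
    (hf : ∀ (x y : V) (t : ℝ), 0 < t → t < t0 → |f x y t| ≤ C * t ^ k)
    (hfL1 : ∀ (x : V) (t : ℝ), 0 < t → t < t0 →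
      Summable (fun z => |f x z t| * θ z) ∧ (∑' z, |f x z t| * θ z) ≤ B) :
    ∀ (x y : V) (t : ℝ), 0 < t → t < t0 →
      Summable (fun ℓ : ℕ => |iterConv θ f ℓ x y t|) ∧
      (∑' ℓ : ℕ, |iterConv θ f ℓ x y t|) ≤ C * B * t ^ k * Real.exp (t * B) / B := by
  intro x y t ht ht0'
  have key := iterConv_bound θ hθ f t0 C B ht0 hC hB k hf hfL1
  have hdom : Summable (fun ℓ : ℕ => C * t ^ k * (B * t) ^ ℓ / ((Nat.factorial ℓ : ℕ) : ℝ)) := by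
    have := (Real.summable_pow_div_factorial (B * t)).mul_left (C * t ^ k)
    simpa [mul_div_assoc] using this
  have hsum : Summable (fun ℓ : ℕ => |iterConv θ f ℓ x y t|) :=
    Summable.of_nonneg_of_le (fun ℓ => abs_nonneg _) (fun ℓ => key ℓ x y t ht ht0') hdom
  refine ⟨hsum, ?_⟩
  have h1 : (∑' ℓ : ℕ, |iterConv θ f ℓ x y t|)
      ≤ ∑' ℓ : ℕ, C * t ^ k * (B * t) ^ ℓ / ((Nat.factorial ℓ : ℕ) : ℝ) :=
    Summable.tsum_le_tsum (fun ℓ => key ℓ x y t ht ht0') hsum hdom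
  refine h1.trans ?_
  have h2 : ∑' ℓ : ℕ, C * t ^ k * (B * t) ^ ℓ / ((Nat.factorial ℓ : ℕ) : ℝ)
      = C * t ^ k * Real.exp (B * t) := by
    rw [Real.exp_eq_exp_ℝ, NormedSpace.exp_eq_tsum_div, ← tsum_mul_left]
    simp [mul_div_assoc]
  rw [h2]
  have : C * B * t ^ k * Real.exp (t * B) / B = C * t ^ k * Real.exp (t * B) := by
    field_simp
  rw [this, mul_comm t B]
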